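/- In the lifting situation of a natural-automorphism proof: if g = g₁ × … × g_n ∈ Aut(K)^n is an automorphism of K^n \ Γ_K that commutes with the covering group action (i.e. normalizes G), then for each i, g_i = g₁ or g_i = g₁ ∘ σ, and moreover g₁ ∘ σ = σ ∘ g₁. -/

import Mathlib

/-- The permutation action of `s : Perm (Fin n)` on `Fin n → K` (permuting the factors). -/
def permAct (K : Type*) {n : ℕ} (s : Equiv.Perm (Fin n)) : Equiv.Perm (Fin n → K) :=
  Equiv.arrowCongr s (Equiv.refl K)

/-- The involution `σ_A` of `K^n` applying `σ` to the coordinates in `A`. -/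
def sigmaOn {K : Type*} (σ : Equiv.Perm K) {n : ℕ} (A : Finset (Fin n)) :
    Equiv.Perm (Fin n → K) :=
  Equiv.piCongrRight fun i => if i ∈ A then σ else Equiv.refl K

/-- The covering transformation group `G`, generated by `S_n` and all the `σ_A`. -/
def bigG {K : Type*} (σ : Equiv.Perm K) (n : ℕ) : Subgroup (Equiv.Perm (Fin n → K)) :=
  Subgroup.closure (Set.range (permAct K (n := n)) ∪ Set.range (sigmaOn σ (n := n)))

/-- The subgroup `H ≤ G`, generated by `S_n` and the `σ_{ij}` applying `σ` to exactly two
coordinates. -/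
def bigH {K : Type*} (σ : Equiv.Perm K) (n : ℕ) : Subgroup (Equiv.Perm (Fin n → K)) :=
  Subgroup.closure (Set.range (permAct K (n := n)) ∪
    {g | ∃ A : Finset (Fin n), A.card = 2 ∧ g = sigmaOn σ A})

/-- The product automorphism `g₁ × ⋯ × g_n` of `K^n`. -/
def prodPerm {K : Type*} {n : ℕ} (g : Fin n → Equiv.Perm K) : Equiv.Perm (Fin n → K) :=
  Equiv.piCongrRight g

/-- `Γ_K ⊆ K^n`: the preimage of the big diagonal of `E^(n)`, i.e. the locus where the
`2n` points `x₁,…,x_n,σ(x₁),…,σ(x_n)` are not pairwise distinct. -/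
def GammaK {K : Type*} (σ : Equiv.Perm K) (n : ℕ) : Set (Fin n → K) :=
  {x | ∃ s t : Fin n, s ≠ t ∧ (x s = x t ∨ x s = σ (x t))}

/-- Auxiliary: one can always pick `m` points avoiding a finite set `F`, whose σ-orbits are
pairwise disjoint. -/
lemma exists_orbitDistinct {K : Type*} [Infinite K] (σ : Equiv.Perm K) (m : ℕ) (F : Finset K) :
    ∃ z : Fin m → K, (∀ j, z j ∉ F) ∧ ∀ j k, j ≠ k → z j ≠ z k ∧ z j ≠ σ (z k) := by
  classical
  induction m with
  | zero => exact ⟨fun j => j.elim0, fun j => j.elim0, fun j => j.elim0⟩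
  | succ m ih =>
    obtain ⟨z, hzF, hz⟩ := ih
    obtain ⟨w, hw⟩ := Infinite.exists_notMem_finset
      (F ∪ Finset.image z Finset.univ ∪ Finset.image (fun j => σ (z j)) Finset.univ
        ∪ Finset.image (fun j => σ.symm (z j)) Finset.univ)
    simp only [Finset.mem_union, Finset.mem_image, Finset.mem_univ, true_and, not_or,
      not_exists] at hw
    obtain ⟨⟨⟨hwF, hw1⟩, hw2⟩, hw3⟩ := hw
    refine ⟨Fin.cons w z, ?_, ?_⟩
    · intro j
      refine Fin.cases ?_ ?_ j
      · simpa using hwF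
      · intro j'; simpa using hzF j'
    · intro j k hjk
      induction j using Fin.cases with
      | zero =>
        induction k using Fin.cases with
        | zero => exact absurd rfl hjk
        | succ k' =>
          simp only [Fin.cons_zero, Fin.cons_succ]
          exact ⟨fun h => hw1 k' h.symm, fun h => hw2 k' h.symm⟩
      | succ j' =>
        induction k using Fin.cases with
        | zero =>
          simp only [Fin.cons_zero, Fin.cons_succ]
          refine ⟨fun h => hw1 j' h, fun h => hw3 j' ?_⟩
          rw [h, Equiv.symm_apply_apply]
        | succ k' =>
          simp only [Fin.cons_succ]
          exact hz j' k' (fun h => hjk (by rw [h]))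
  
/-- Auxiliary: given `a ∉ {b, σ b}` and `s ≠ t`, there is a point of `K^n` off `Γ_K` with
`x s = a`, `x t = b`. -/
lemma exists_offGamma {K : Type*} [Infinite K] (σ : Equiv.Perm K) (hinv : ∀ x : K, σ (σ x) = x)
    {n : ℕ} (s t : Fin n) (hst : s ≠ t) (a b : K) (h1 : a ≠ b) (h2 : a ≠ σ b) :
    ∃ x : Fin n → K, x s = a ∧ x t = b ∧ x ∉ GammaK σ n := by
  classical
  obtain ⟨z, hzF, hz⟩ := exists_orbitDistinct σ n ({a, σ a, b, σ b} : Finset K)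
  simp only [Finset.mem_insert, Finset.mem_singleton, not_or] at hzF
  have hba : b ≠ σ a := by
    intro h; apply h2; rw [h, hinv]
  -- helper facts
  have haz : ∀ j, a ≠ z j ∧ a ≠ σ (z j) := by
    intro j
    refine ⟨fun h => (hzF j).1 h.symm, fun h => (hzF j).2.1 ?_⟩
    rw [h, hinv]
  have hbz : ∀ j, b ≠ z j ∧ b ≠ σ (z j) := by
    intro j
    refine ⟨fun h => (hzF j).2.2.1 h.symm, fun h => (hzF j).2.2.2 ?_⟩
    rw [h, hinv]
  have hza : ∀ j, z j ≠ a ∧ z j ≠ σ a := fun j => ⟨(hzF j).1, (hzF j).2.1⟩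
  have hzb : ∀ j, z j ≠ b ∧ z j ≠ σ b := fun j => ⟨(hzF j).2.2.1, (hzF j).2.2.2⟩
  set x : Fin n → K := fun j => if j = s then a else if j = t then b else z j with hxdef
  have hxs : x s = a := by simp [hxdef]
  have hxt : x t = b := by simp [hxdef, if_neg (Ne.symm hst)]
  have hxv : ∀ j : Fin n, (j = s ∧ x j = a) ∨ (j = t ∧ x j = b) ∨ (j ≠ s ∧ j ≠ t ∧ x j = z j) := by
    intro j
    by_cases h1' : j = s
    · exact Or.inl ⟨h1', by simp [hxdef, h1']⟩
    · by_cases h2' : j = t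
      · exact Or.inr (Or.inl ⟨h2', by simp [hxdef, h1', h2', Ne.symm hst]⟩)
      · exact Or.inr (Or.inr ⟨h1', h2', by simp [hxdef, h1', h2']⟩)
  refine ⟨x, hxs, hxt, ?_⟩
  rintro ⟨p, q, hpq, hor⟩
  rcases hxv p with ⟨hp, hvp⟩ | ⟨hp, hvp⟩ | ⟨hp1, hp2, hvp⟩ <;>
    rcases hxv q with ⟨hq, hvq⟩ | ⟨hq, hvq⟩ | ⟨hq1, hq2, hvq⟩ <;>
    rw [hvp, hvq] at hor
  · exact hpq (hp.trans hq.symm)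
  · rcases hor with h | h
    · exact h1 h
    · exact h2 h
  · rcases hor with h | h
    · exact (haz q).1 h
    · exact (haz q).2 h
  · rcases hor with h | h
    · exact h1 h.symm
    · exact hba h
  · exact hpq (hp.trans hq.symm)
  · rcases hor with h | h
    · exact (hbz q).1 h
    · exact (hbz q).2 h
  · rcases hor with h | h
    · exact (hza p).1 h
    · exact (hza p).2 h
  · rcases hor with h | h
    · exact (hzb p).1 h
    · exact (hzb p).2 h
  · rcases hor with h | h
    · exact (hz p q hpq).1 h
    · exact (hz p q hpq).2 h

/-- if `g = g₁ × ⋯ × g_n` is an automorphism of `K^n \ Γ_K` normalizing the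
covering group `G`, then each `g_i` equals `g₁` or `g₁ ∘ σ`, and `g₁ ∘ σ = σ ∘ g₁`. -/
theorem stmt8 {K : Type*} [Infinite K] (σ : Equiv.Perm K)
    (hinv : ∀ x : K, σ (σ x) = x) (hfree : ∀ x : K, σ x ≠ x)
    (n : ℕ) (hn : 2 ≤ n) (g : Fin n → Equiv.Perm K)
    (hpres : ∀ x : Fin n → K, x ∉ GammaK σ n → prodPerm g x ∉ GammaK σ n)
    (hpres' : ∀ x : Fin n → K, x ∉ GammaK σ n → (prodPerm g).symm x ∉ GammaK σ n)
    (hnorm : ∀ u ∈ bigG σ n, prodPerm g * u * (prodPerm g)⁻¹ ∈ bigG σ n) :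
    (∀ i : Fin n, g i = g ⟨0, by omega⟩ ∨ g i = g ⟨0, by omega⟩ * σ) ∧
    g ⟨0, by omega⟩ * σ = σ * g ⟨0, by omega⟩ := by
  classical
  have hn0 : (0 : ℕ) < n := by omega
  have hn1 : (1 : ℕ) < n := by omega
  have e0 : Fin n := ⟨0, hn0⟩
  -- we use explicit anonymous constructors throughout; `e0` is a name for readability
  set E0 : Fin n := ⟨0, hn0⟩ with hE0
  set E1 : Fin n := ⟨1, hn1⟩ with hE1
  have he01 : E0 ≠ E1 := by simp [hE0, hE1, Fin.ext_iff]
  -- Step 1: pointwise relations from preservation of the complement of Γ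
  have key : ∀ s t : Fin n, s ≠ t → ∀ b : K,
      (g t b = g s b ∨ g t b = g s (σ b)) ∧
      (σ (g t b) = g s b ∨ σ (g t b) = g s (σ b)) := by
    intro s t hst b
    have prodapp : ∀ (x : Fin n → K) (j : Fin n), prodPerm g x j = g j (x j) := fun _ _ => rfl
    constructor
    · by_contra hcon
      push_neg at hcon
      obtain ⟨h1, h2⟩ := hcon
      set a := (g s).symm (g t b) with ha
      have hgsa : g s a = g t b := (g s).apply_symm_apply _
      have ha1 : a ≠ b := fun h => h1 (by rw [← hgsa, h])
      have ha2 : a ≠ σ b := fun h => h2 (by rw [← hgsa, h])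
      obtain ⟨x, hxs, hxt, hxΓ⟩ := exists_offGamma σ hinv s t hst a b ha1 ha2
      refine hpres x hxΓ ⟨s, t, hst, Or.inl ?_⟩
      rw [prodapp, prodapp, hxs, hxt, hgsa]
    · by_contra hcon
      push_neg at hcon
      obtain ⟨h1, h2⟩ := hcon
      set a := (g s).symm (σ (g t b)) with ha
      have hgsa : g s a = σ (g t b) := (g s).apply_symm_apply _
      have ha1 : a ≠ b := fun h => h1 (by rw [← hgsa, h])
      have ha2 : a ≠ σ b := fun h => h2 (by rw [← hgsa, h])
      obtain ⟨x, hxs, hxt, hxΓ⟩ := exists_offGamma σ hinv s t hst a b ha1 ha2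
      refine hpres x hxΓ ⟨s, t, hst, Or.inr ?_⟩
      rw [prodapp, prodapp, hxs, hxt, hgsa]
  -- Step 2: every `g p` commutes with `σ`
  have comm : ∀ (p : Fin n) (b : K), g p (σ b) = σ (g p b) := by
    intro p b
    obtain ⟨t, hpt⟩ : ∃ t : Fin n, p ≠ t := by
      by_cases h : p = E0
      · exact ⟨E1, by rw [h]; exact he01⟩
      · exact ⟨E0, h⟩
    rcases key p t hpt b with ⟨h1 | h1, h2 | h2⟩
    · exact absurd (h2.trans h1.symm) (hfree _)
    · rw [← h1]; exact h2.symm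
    · rw [← h1, ← h2, hinv]
    · exact absurd (h2.trans h1.symm) (hfree _)
  -- Step 3: structure theorem for elements of `bigG`
  have hG : ∀ u ∈ bigG σ n, ∃ (ε : Fin n → Bool) (s : Equiv.Perm (Fin n)),
      ∀ (x : Fin n → K) (j : Fin n), u x j = cond (ε j) (σ (x (s j))) (x (s j)) := by
    intro u hu
    refine Subgroup.closure_induction ?_ ?_ ?_ ?_ hu
    · rintro v (⟨s, rfl⟩ | ⟨A, rfl⟩)
      · exact ⟨fun _ => false, s.symm, fun x j => rfl⟩
      · refine ⟨fun j => decide (j ∈ A), 1, fun x j => ?_⟩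
        show (if j ∈ A then σ else Equiv.refl K) (x j) = _
        by_cases h : j ∈ A <;> simp [h]
    · exact ⟨fun _ => false, 1, fun x j => rfl⟩
    · rintro u v _ _ ⟨εu, su, hU⟩ ⟨εv, sv, hV⟩
      refine ⟨fun j => xor (εu j) (εv (su j)), su.trans sv, fun x j => ?_⟩
      have h : (u * v) x j = u (v x) j := rfl
      rw [h, hU, hV]
      cases hu' : εu j <;> cases hv' : εv (su j) <;> simp [hu', hv', hinv, Equiv.trans_apply]
    · rintro u _ ⟨ε, s, hU⟩
      refine ⟨fun k => ε (s.symm k), s.symm, fun x k => ?_⟩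
      have hy : u (fun k => cond (ε (s.symm k)) (σ (x (s.symm k))) (x (s.symm k))) = x := by
        funext j
        rw [hU]
        simp only [Equiv.symm_apply_apply]
        cases he' : ε j <;> simp [he', hinv]
      conv_lhs => rw [← hy]
      exact congrFun (u.symm_apply_apply _) k
  -- Step 4: uniformity from normalization
  have main : ∀ i : Fin n, g i = g E0 ∨ g i = g E0 * σ := by
    intro i
    by_cases hi : i = E0
    · subst hi; left; rfl
    · have hτmem : permAct K (Equiv.swap E0 i) ∈ bigG σ n :=
        Subgroup.subset_closure (Or.inl ⟨_, rfl⟩)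
      obtain ⟨ε, s, hc⟩ := hG _ (hnorm _ hτmem)
      have hci : ∀ x : Fin n → K,
          g i ((g E0).symm (x E0)) = cond (ε i) (σ (x (s i))) (x (s i)) := by
        intro x
        have h := hc x i
        have hlhs : (prodPerm g * permAct K (Equiv.swap E0 i) * (prodPerm g)⁻¹) x i
            = g i ((g ((Equiv.swap E0 i).symm i)).symm (x ((Equiv.swap E0 i).symm i))) := rfl
        rw [hlhs, Equiv.symm_swap, Equiv.swap_apply_right] at h
        exact h
      have hsi : s i = E0 := by
        by_contra hne
        obtain ⟨p, q, hpq⟩ := exists_pair_ne K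
        have h1 := hci (fun _ => q)
        have h2 := hci (fun k => if k = s i then p else q)
        simp only [if_pos rfl, if_neg (show E0 ≠ s i from fun h => hne h.symm)] at h2
        rw [h1] at h2
        cases hb : ε i <;> rw [hb] at h2 <;> simp only [Bool.cond_false, Bool.cond_true] at h2
        · exact hpq h2.symm
        · exact hpq (σ.injective h2).symm
      have hval : ∀ b : K, g i b = cond (ε i) (σ (g E0 b)) (g E0 b) := by
        intro b
        have h := hci (fun _ => g E0 b)
        simpa using h
      cases h : ε i with
      | false =>
        left; ext b
        have := hval b; rw [h] at this; simpa using this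
      | true =>
        right; ext b
        have hb := hval b; rw [h] at hb
        show g i b = g E0 (σ b)
        rw [comm E0 b]; simpa using hb
    -- done
  refine ⟨?_, ?_⟩
  · intro i; exact main i
  · exact Equiv.ext fun b => comm E0 b
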